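/- arXiv:1705.07837 — 3 statements merged into one kernel-verified Lean document; each statement's English description precedes it below -/
import Mathlib

section
/- For every optimal solution (I₁,…,I_K) of the cardinality-constrained K-means clustering problem and every pair of distinct clusters I_k, I_ℓ with centroids ζ_k, ζ_ℓ, the hyperplane with normal vector h = ζ_k − ζ_ℓ separates the two clusters: for all i_k ∈ I_k and i_ℓ ∈ I_ℓ, hᵀ(ξ_{i_k} − ξ_{i_ℓ}) ≥ 0. -/
open RealInnerProductSpace

lemma centroid_min {E ι : Type*} [NormedAddCommGroup E] [InnerProductSpace ℝ E]
    (S : Finset ι) (x : ι → E) (c : E) (hS : S.Nonempty) :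
    ∑ i ∈ S, ‖x i - (S.card : ℝ)⁻¹ • ∑ j ∈ S, x j‖ ^ 2 ≤ ∑ i ∈ S, ‖x i - c‖ ^ 2 := by
  set μ := (S.card : ℝ)⁻¹ • ∑ j ∈ S, x j with hμ
  have hcard : (S.card : ℝ) ≠ 0 := by
    exact_mod_cast Finset.card_ne_zero_of_mem hS.choose_spec
  have hkey : ∑ i ∈ S, (x i - μ) = 0 := by
    rw [Finset.sum_sub_distrib, Finset.sum_const, sub_eq_zero, hμ,
      ← Nat.cast_smul_eq_nsmul ℝ, smul_smul, mul_inv_cancel₀ hcard, one_smul]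
  have hexp : ∑ i ∈ S, ‖x i - c‖ ^ 2
      = ∑ i ∈ S, ‖x i - μ‖ ^ 2 + 2 * ⟪∑ i ∈ S, (x i - μ), μ - c⟫
        + S.card * ‖μ - c‖ ^ 2 := by
    have h1 : ∀ i ∈ S, ‖x i - c‖ ^ 2
        = ‖x i - μ‖ ^ 2 + 2 * ⟪x i - μ, μ - c⟫ + ‖μ - c‖ ^ 2 := by
      intro i _
      rw [show x i - c = (x i - μ) + (μ - c) by abel, norm_add_sq_real]
    rw [Finset.sum_congr rfl h1, Finset.sum_add_distrib, Finset.sum_add_distrib,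
      Finset.sum_const, ← Finset.mul_sum, sum_inner, nsmul_eq_mul]
  rw [hexp, hkey, inner_zero_left]
  have : (0:ℝ) ≤ S.card * ‖μ - c‖ ^ 2 := by positivity
  linarith


/-- The cardinality-constrained K-means objective of a partition `I` of the
datapoints `ξ`, where cluster `k` has prescribed cardinality `nk k`. -/
noncomputable def kmeansObj {N d K : ℕ} (ξ : Fin N → EuclideanSpace ℝ (Fin d))
    (nk : Fin K → ℕ) (I : Fin K → Finset (Fin N)) : ℝ :=
  ∑ k, ∑ i ∈ I k, ‖ξ i - (nk k : ℝ)⁻¹ • ∑ j ∈ I k, ξ j‖ ^ 2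

/-- A feasible partition of `{1,…,N}` into clusters of cardinalities `nk`. -/
def FeasiblePartition {N K : ℕ} (nk : Fin K → ℕ) (I : Fin K → Finset (Fin N)) : Prop :=
  (∀ k, (I k).card = nk k) ∧ (∀ k ℓ, k ≠ ℓ → Disjoint (I k) (I ℓ)) ∧
    (∀ i : Fin N, ∃ k, i ∈ I k)

theorem optimal_clusters_hyperplane_separated (N d K : ℕ)
    (ξ : Fin N → EuclideanSpace ℝ (Fin d)) (nk : Fin K → ℕ)
    (hnk : ∀ k, nk k ≠ 0)
    (I : Fin K → Finset (Fin N)) (hfeas : FeasiblePartition nk I)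
    (hopt : ∀ J : Fin K → Finset (Fin N), FeasiblePartition nk J →
      kmeansObj ξ nk I ≤ kmeansObj ξ nk J)
    (k ℓ : Fin K) (hkl : k ≠ ℓ)
    (ik : Fin N) (hik : ik ∈ I k) (il : Fin N) (hil : il ∈ I ℓ) :
    0 ≤ inner (𝕜 := ℝ)
        (((nk k : ℝ)⁻¹ • ∑ j ∈ I k, ξ j) - ((nk ℓ : ℝ)⁻¹ • ∑ j ∈ I ℓ, ξ j))
        (ξ ik - ξ il) := by
  obtain ⟨hcard, hdisj, hcover⟩ := hfeas
  have hilk : il ∉ I k := fun h => (Finset.disjoint_left.mp (hdisj k ℓ hkl) h) hil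
  have hikl : ik ∉ I ℓ := fun h => (Finset.disjoint_left.mp (hdisj k ℓ hkl) hik) h
  have hne : ik ≠ il := fun h => hilk (h ▸ hik)
  set σ := Equiv.swap ik il with hσ
  set J : Fin K → Finset (Fin N) := fun m => (I m).map σ.toEmbedding with hJ
  have hJfeas : FeasiblePartition nk J := by
    refine ⟨fun m => by simp [hJ, hcard m], fun m m' hmm => ?_, fun i => ?_⟩
    · simpa [hJ, Finset.disjoint_map] using hdisj m m' hmm
    · obtain ⟨m, hm⟩ := hcover (σ i)
      exact ⟨m, Finset.mem_map.mpr ⟨σ i, hm, by simp [hσ]⟩⟩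
  -- centroids of I
  set ζ : Fin K → EuclideanSpace ℝ (Fin d) := fun m => (nk m : ℝ)⁻¹ • ∑ j ∈ I m, ξ j with hζ
  have hstep1 : kmeansObj ξ nk J ≤ ∑ m, ∑ i ∈ I m, ‖ξ (σ i) - ζ m‖ ^ 2 := by
    unfold kmeansObj
    apply Finset.sum_le_sum
    intro m _
    have hcardJ : (J m).card = nk m := by simp [hJ, hcard m]
    have hne' : (J m).Nonempty := by
      rw [← Finset.card_pos, hcardJ]
      exact Nat.pos_of_ne_zero (hnk m)
    calc ∑ i ∈ J m, ‖ξ i - (nk m : ℝ)⁻¹ • ∑ j ∈ J m, ξ j‖ ^ 2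
        = ∑ i ∈ J m, ‖ξ i - ((J m).card : ℝ)⁻¹ • ∑ j ∈ J m, ξ j‖ ^ 2 := by rw [hcardJ]
      _ ≤ ∑ i ∈ J m, ‖ξ i - ζ m‖ ^ 2 := centroid_min (J m) ξ (ζ m) hne'
      _ = ∑ i ∈ I m, ‖ξ (σ i) - ζ m‖ ^ 2 := by rw [hJ]; exact Finset.sum_map _ _ _
  have hswapfix : ∀ m, m ≠ k → m ≠ ℓ → ∀ i ∈ I m, σ i = i := by
    intro m hmk hml i hi
    apply Equiv.swap_apply_of_ne_of_ne
    · exact fun h => (Finset.disjoint_left.mp (hdisj m k hmk) hi) (h ▸ hik)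
    · exact fun h => (Finset.disjoint_left.mp (hdisj m ℓ hml) hi) (h ▸ hil)
  set ck : ℝ := ‖ξ il - ζ k‖ ^ 2 - ‖ξ ik - ζ k‖ ^ 2 with hck
  set cl : ℝ := ‖ξ ik - ζ ℓ‖ ^ 2 - ‖ξ il - ζ ℓ‖ ^ 2 with hcl
  have hdiff : ∀ m, (∑ i ∈ I m, ‖ξ (σ i) - ζ m‖ ^ 2) - (∑ i ∈ I m, ‖ξ i - ζ m‖ ^ 2)
      = if m = k then ck else if m = ℓ then cl else 0 := by
    intro m
    rw [← Finset.sum_sub_distrib]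
    by_cases hmk : m = k
    · subst hmk
      rw [if_pos rfl]
      rw [Finset.sum_eq_single_of_mem ik hik]
      · simp [hσ, Equiv.swap_apply_left, hck]
      · intro b hb hbik
        have : σ b = b := Equiv.swap_apply_of_ne_of_ne hbik (fun h => hilk (h ▸ hb))
        rw [this, sub_self]
    · by_cases hml : m = ℓ
      · subst hml
        rw [if_neg hmk, if_pos rfl]
        rw [Finset.sum_eq_single_of_mem il hil]
        · simp [hσ, Equiv.swap_apply_right, hcl]
        · intro b hb hbil
          have : σ b = b :=
            Equiv.swap_apply_of_ne_of_ne (fun h => hikl (h ▸ hb)) hbil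
          rw [this, sub_self]
      · rw [if_neg hmk, if_neg hml]
        apply Finset.sum_eq_zero
        intro i hi
        rw [hswapfix m hmk hml i hi, sub_self]
  have hstep2 : ∑ m, ∑ i ∈ I m, ‖ξ (σ i) - ζ m‖ ^ 2 = kmeansObj ξ nk I + ck + cl := by
    have h1 : ∑ m, ((∑ i ∈ I m, ‖ξ (σ i) - ζ m‖ ^ 2) - (∑ i ∈ I m, ‖ξ i - ζ m‖ ^ 2))
        = ck + cl := by
      rw [Finset.sum_congr rfl (fun m _ => hdiff m)]
      have : ∀ m : Fin K, (if m = k then ck else if m = ℓ then cl else 0)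
          = (if m = k then ck else 0) + (if m = ℓ then cl else 0) := by
        intro m
        by_cases h1 : m = k
        · subst h1; simp [hkl]
        · simp [h1]
      rw [Finset.sum_congr rfl (fun m _ => this m), Finset.sum_add_distrib]
      simp
    rw [Finset.sum_sub_distrib] at h1
    have : kmeansObj ξ nk I = ∑ m, ∑ i ∈ I m, ‖ξ i - ζ m‖ ^ 2 := rfl
    rw [this]
    linarith
  have hfinal : (0:ℝ) ≤ ck + cl := by
    have := hopt J hJfeas
    rw [hstep2] at hstep1
    linarith
  have e1 : ck = ‖ξ il‖^2 - ‖ξ ik‖^2 - 2 * ⟪ξ il - ξ ik, ζ k⟫ := by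
    rw [hck, norm_sub_sq_real, norm_sub_sq_real, inner_sub_left]; ring
  have e2 : cl = ‖ξ ik‖^2 - ‖ξ il‖^2 - 2 * ⟪ξ ik - ξ il, ζ ℓ⟫ := by
    rw [hcl, norm_sub_sq_real, norm_sub_sq_real, inner_sub_left]; ring
  have e3 : ⟪ζ k - ζ ℓ, ξ ik - ξ il⟫
      = (⟪ξ ik, ζ k⟫ - ⟪ξ il, ζ k⟫) - (⟪ξ ik, ζ ℓ⟫ - ⟪ξ il, ζ ℓ⟫) := by
    rw [inner_sub_left, inner_sub_right, inner_sub_right,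
      real_inner_comm (ζ k), real_inner_comm (ζ k), real_inner_comm (ζ ℓ), real_inner_comm (ζ ℓ)]
  have : (0:ℝ) ≤ ⟪ζ k - ζ ℓ, ξ ik - ξ il⟫ := by
    rw [inner_sub_left] at e1 e2
    rw [e3]; rw [e1, e2] at hfinal; linarith
  simpa [hζ] using this
end

section
/- Suppose a partition (J₁,…,J_K) of {1,…,N} into equal clusters of size n = N/K satisfies the perfect separation condition: the maximum squared distance between two points in the same cluster is strictly smaller than the minimum squared distance between points of distinct clusters. Then (J₁,…,J_K) is the unique optimal solution of the balanced cardinality-constrained K-means problem, and its objective value equals (1/(2n))∑ₖ∑_{i,j∈J_k} d_{ij}, which is (1/(2n)) times the sum of the Kn(n−1) smallest off-diagonal entries of the squared-distance matrix D. -/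
/-- The balanced K-means objective of a partition into clusters of size `n`. -/
noncomputable def balancedKmeansObj {N d K : ℕ} (n : ℕ)
    (ξ : Fin N → EuclideanSpace ℝ (Fin d)) (I : Fin K → Finset (Fin N)) : ℝ :=
  ∑ k, ∑ i ∈ I k, ‖ξ i - (n : ℝ)⁻¹ • ∑ j ∈ I k, ξ j‖ ^ 2

/-- A balanced partition of `{1,…,N}` into `K` clusters of size `n`. -/
def BalancedPartition {N K : ℕ} (n : ℕ) (I : Fin K → Finset (Fin N)) : Prop :=
  (∀ k, (I k).card = n) ∧ (∀ k ℓ, k ≠ ℓ → Disjoint (I k) (I ℓ)) ∧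
    (∀ i : Fin N, ∃ k, i ∈ I k)

open Finset

/-- The set of ordered within-cluster pairs of distinct indices. -/
def bkmPairs {N K : ℕ} (I : Fin K → Finset (Fin N)) : Finset (Fin N × Fin N) :=
  Finset.univ.offDiag.filter (fun p : Fin N × Fin N => ∃ k, p.1 ∈ I k ∧ p.2 ∈ I k)

lemma bkm_mem_pairs {N K : ℕ} (I : Fin K → Finset (Fin N)) (p : Fin N × Fin N) :
    p ∈ bkmPairs I ↔ p.1 ≠ p.2 ∧ ∃ k, p.1 ∈ I k ∧ p.2 ∈ I k := by
  unfold bkmPairs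
  simp [Finset.mem_offDiag]

lemma bkm_sum_sq_dist_mean {E : Type*} [NormedAddCommGroup E] [InnerProductSpace ℝ E]
    {ι : Type*} (S : Finset ι) (ξ : ι → E) (n : ℕ) (hS : S.card = n) (hn : 0 < n) :
    ∑ i ∈ S, ‖ξ i - (n : ℝ)⁻¹ • ∑ j ∈ S, ξ j‖ ^ 2
      = (1 / (2 * n)) * ∑ i ∈ S, ∑ j ∈ S, ‖ξ i - ξ j‖ ^ 2 := by
  have hn' : (n : ℝ) ≠ 0 := Nat.cast_ne_zero.mpr hn.ne'
  set s := ∑ j ∈ S, ξ j with hs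
  have expand : ∀ x y : E, ‖x - y‖ ^ 2 = ‖x‖ ^ 2 - 2 * inner ℝ x y + ‖y‖ ^ 2 :=
    fun x y => norm_sub_sq_real x y
  have hinner : ∑ i ∈ S, (inner ℝ (ξ i) s : ℝ) = ‖s‖ ^ 2 := by
    rw [← sum_inner, ← real_inner_self_eq_norm_sq]
  have hnormsmul : ‖(n : ℝ)⁻¹ • s‖ ^ 2 = (n : ℝ)⁻¹ ^ 2 * ‖s‖ ^ 2 := by
    rw [norm_smul]; simp [mul_pow]
  have lhs : ∑ i ∈ S, ‖ξ i - (n : ℝ)⁻¹ • s‖ ^ 2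
      = (∑ i ∈ S, ‖ξ i‖ ^ 2) - 2 * (n : ℝ)⁻¹ * ‖s‖ ^ 2 + (n : ℝ) * ((n : ℝ)⁻¹ ^ 2 * ‖s‖ ^ 2) := by
    simp only [expand, real_inner_smul_right, hnormsmul, Finset.sum_add_distrib,
      Finset.sum_sub_distrib, ← Finset.mul_sum, hinner, Finset.sum_const, hS, nsmul_eq_mul]
    ring
  have rhs : ∑ i ∈ S, ∑ j ∈ S, ‖ξ i - ξ j‖ ^ 2
      = 2 * (n : ℝ) * (∑ i ∈ S, ‖ξ i‖ ^ 2) - 2 * ‖s‖ ^ 2 := by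
    simp only [expand, Finset.sum_add_distrib, Finset.sum_sub_distrib, ← Finset.mul_sum,
      hinner, Finset.sum_const, hS, nsmul_eq_mul, ← sum_inner, ← inner_sum,
      ← real_inner_self_eq_norm_sq]
    ring
  rw [lhs, rhs]
  field_simp
  ring

lemma bkm_sum_lt_of_pointwise_lt {α : Type*} [DecidableEq α] (A B : Finset α) (f : α → ℝ)
    (hcard : A.card = B.card) (hA : A.Nonempty) (h : ∀ a ∈ A, ∀ b ∈ B, f a < f b) :
    ∑ a ∈ A, f a < ∑ b ∈ B, f b := by
  have e : (A : Finset α) ≃ (B : Finset α) := Finset.equivOfCardEq hcard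
  rw [← Finset.sum_coe_sort A f, ← Finset.sum_coe_sort B f,
    ← Equiv.sum_comp e (fun b : B => f b)]
  have hne : Nonempty A := by obtain ⟨a, ha⟩ := hA; exact ⟨⟨a, ha⟩⟩
  apply Finset.sum_lt_sum_of_nonempty ⟨Classical.arbitrary _, Finset.mem_univ _⟩
  intro a _
  exact h a a.2 (e a) (e a).2

lemma bkm_sum_le_of_pointwise_lt {α : Type*} [DecidableEq α] (A B : Finset α) (f : α → ℝ)
    (hcard : A.card = B.card) (h : ∀ a ∈ A, ∀ b ∈ B, f a < f b) :
    ∑ a ∈ A, f a ≤ ∑ b ∈ B, f b := by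
  rcases A.eq_empty_or_nonempty with rfl | hA
  · have : B = ∅ := by rw [← Finset.card_eq_zero, ← hcard, Finset.card_empty]
    simp [this]
  · exact (bkm_sum_lt_of_pointwise_lt A B f hcard hA h).le

/-- The within-cluster pair set equals the disjoint union of cluster off-diagonals. -/
lemma bkm_pairs_eq_biUnion {N K n : ℕ} (I : Fin K → Finset (Fin N))
    (hI : BalancedPartition n I) :
    bkmPairs I = Finset.univ.biUnion (fun k => (I k).offDiag) := by
  ext ⟨i, j⟩
  rw [bkm_mem_pairs]
  simp only [Finset.mem_biUnion, Finset.mem_univ, true_and, Finset.mem_offDiag]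
  constructor
  · rintro ⟨hij, k, hi, hj⟩
    exact ⟨k, hi, hj, hij⟩
  · rintro ⟨k, hi, hj, hij⟩
    exact ⟨hij, k, hi, hj⟩

lemma bkm_pairwise_disjoint {N K n : ℕ} (I : Fin K → Finset (Fin N))
    (hI : BalancedPartition n I) :
    ∀ k ∈ (Finset.univ : Finset (Fin K)), ∀ ℓ ∈ (Finset.univ : Finset (Fin K)), k ≠ ℓ →
      Disjoint ((I k).offDiag) ((I ℓ).offDiag) := by
  intro k _ ℓ _ hkl
  rw [Finset.disjoint_left]
  rintro ⟨i, j⟩ hk hl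
  rw [Finset.mem_offDiag] at hk hl
  exact absurd hl.1 (Finset.disjoint_left.mp (hI.2.1 k ℓ hkl) hk.1)

lemma bkm_pairs_card {N K n : ℕ} (I : Fin K → Finset (Fin N)) (hI : BalancedPartition n I) :
    (bkmPairs I).card = K * n * (n - 1) := by
  rw [bkm_pairs_eq_biUnion I hI, Finset.card_biUnion (bkm_pairwise_disjoint I hI)]
  have h1 : ∀ k, ((I k).offDiag).card = n * (n - 1) := by
    intro k
    rw [Finset.offDiag_card, hI.1 k, Nat.mul_sub, Nat.mul_one]
  simp [h1, Finset.sum_const, mul_assoc]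

lemma bkm_sum_pairs {N K n : ℕ} (I : Fin K → Finset (Fin N)) (hI : BalancedPartition n I)
    (g : Fin N → Fin N → ℝ) (hg : ∀ i, g i i = 0) :
    ∑ k, ∑ i ∈ I k, ∑ j ∈ I k, g i j = ∑ p ∈ bkmPairs I, g p.1 p.2 := by
  rw [bkm_pairs_eq_biUnion I hI, Finset.sum_biUnion (bkm_pairwise_disjoint I hI)]
  apply Finset.sum_congr rfl
  intro k _
  rw [← Finset.sum_product']
  symm
  apply Finset.sum_subset
  · intro p hp
    rw [Finset.mem_offDiag] at hp
    exact Finset.mem_product.mpr ⟨hp.1, hp.2.1⟩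
  · rintro ⟨i, j⟩ hmem hnot
    rw [Finset.mem_product] at hmem
    rw [Finset.mem_offDiag] at hnot
    push_neg at hnot
    have : i = j := hnot hmem.1 hmem.2
    simp [this, hg]

theorem perfect_separation_recovery (N d K n : ℕ)
    (hK : 0 < K) (hn : 0 < n) (hN : N = K * n)
    (ξ : Fin N → EuclideanSpace ℝ (Fin d))
    (dist2 : Fin N → Fin N → ℝ)
    (hdist : ∀ i j, dist2 i j = ‖ξ i - ξ j‖ ^ 2)
    (J : Fin K → Finset (Fin N)) (hJ : BalancedPartition n J)
    -- perfect separation: every within-cluster distance is smaller than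
    -- every between-cluster distance
    (hsep : ∀ k : Fin K, ∀ i ∈ J k, ∀ j ∈ J k,
      ∀ k₁ k₂ : Fin K, k₁ ≠ k₂ → ∀ i' ∈ J k₁, ∀ j' ∈ J k₂,
        dist2 i j < dist2 i' j') :
    -- (a) optimality of J
    (∀ I : Fin K → Finset (Fin N), BalancedPartition n I →
      balancedKmeansObj n ξ J ≤ balancedKmeansObj n ξ I) ∧
    -- (b) uniqueness up to relabeling of the clusters
    (∀ I : Fin K → Finset (Fin N), BalancedPartition n I →
      balancedKmeansObj n ξ I = balancedKmeansObj n ξ J →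
      ∃ σ : Equiv.Perm (Fin K), ∀ k, I k = J (σ k)) ∧
    -- (c) the optimal value
    (balancedKmeansObj n ξ J =
      (1 / (2 * n)) * ∑ k, ∑ i ∈ J k, ∑ j ∈ J k, dist2 i j) ∧
    -- (d) the within-cluster pairs form a set of K·n·(n−1) off-diagonal pairs
    -- of minimal total squared distance
    ((Finset.univ.offDiag.filter
        (fun p : Fin N × Fin N => ∃ k, p.1 ∈ J k ∧ p.2 ∈ J k)).card
        = K * n * (n - 1) ∧
      ∀ T ⊆ (Finset.univ : Finset (Fin N)).offDiag, T.card = K * n * (n - 1) →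
        ∑ p ∈ Finset.univ.offDiag.filter
            (fun p : Fin N × Fin N => ∃ k, p.1 ∈ J k ∧ p.2 ∈ J k),
          dist2 p.1 p.2 ≤ ∑ p ∈ T, dist2 p.1 p.2) := by
  classical
  have hg0 : ∀ i, dist2 i i = 0 := by intro i; rw [hdist]; simp
  -- objective in terms of pair sums
  have hobj : ∀ I : Fin K → Finset (Fin N), BalancedPartition n I →
      balancedKmeansObj n ξ I = (1 / (2 * n)) * ∑ p ∈ bkmPairs I, dist2 p.1 p.2 := by
    intro I hI
    unfold balancedKmeansObj
    have h1 : ∀ k : Fin K, ∑ i ∈ I k, ‖ξ i - (n : ℝ)⁻¹ • ∑ j ∈ I k, ξ j‖ ^ 2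
        = (1 / (2 * n)) * ∑ i ∈ I k, ∑ j ∈ I k, ‖ξ i - ξ j‖ ^ 2 := fun k =>
      bkm_sum_sq_dist_mean (I k) ξ n (hI.1 k) hn
    simp only [h1, ← Finset.mul_sum]
    congr 1
    have := bkm_sum_pairs I hI dist2 hg0
    simp only [hdist] at this ⊢
    exact this
  -- key comparison: within pairs of J beat anything else
  have hkey : ∀ T : Finset (Fin N × Fin N), T ⊆ Finset.univ.offDiag →
      T.card = K * n * (n - 1) →
      (∑ p ∈ bkmPairs J, dist2 p.1 p.2 ≤ ∑ p ∈ T, dist2 p.1 p.2) ∧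
      (T ≠ bkmPairs J → ∑ p ∈ bkmPairs J, dist2 p.1 p.2 < ∑ p ∈ T, dist2 p.1 p.2) := by
    intro T hTsub hTcard
    have hPJcard : (bkmPairs J).card = K * n * (n - 1) := bkm_pairs_card J hJ
    have hcards : (bkmPairs J \ T).card = (T \ bkmPairs J).card := by
      have h1 := Finset.card_sdiff_add_card_inter (bkmPairs J) T
      have h2 := Finset.card_sdiff_add_card_inter T (bkmPairs J)
      rw [Finset.inter_comm] at h2
      omega
    have hlt : ∀ a ∈ bkmPairs J \ T, ∀ b ∈ T \ bkmPairs J,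
        dist2 a.1 a.2 < dist2 b.1 b.2 := by
      rintro ⟨i, j⟩ ha ⟨i', j'⟩ hb
      have ha' := (Finset.mem_sdiff.mp ha).1
      have hb1 : (i', j') ∈ T := (Finset.mem_sdiff.mp hb).1
      have hb2 : (i', j') ∉ bkmPairs J := (Finset.mem_sdiff.mp hb).2
      rw [bkm_mem_pairs] at ha'
      obtain ⟨-, k, hik, hjk⟩ := ha'
      have hb1' : (i', j') ∈ Finset.univ.offDiag := hTsub hb1
      rw [Finset.mem_offDiag] at hb1'
      obtain ⟨k₁, hk₁⟩ := hJ.2.2 i'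
      obtain ⟨k₂, hk₂⟩ := hJ.2.2 j'
      have hk12 : k₁ ≠ k₂ := by
        rintro rfl
        exact hb2 ((bkm_mem_pairs J _).mpr ⟨hb1'.2.2, k₁, hk₁, hk₂⟩)
      exact hsep k i hik j hjk k₁ k₂ hk12 i' hk₁ j' hk₂
    have e1 : ∑ p ∈ bkmPairs J, dist2 p.1 p.2
        = ∑ p ∈ bkmPairs J ∩ T, dist2 p.1 p.2 + ∑ p ∈ bkmPairs J \ T, dist2 p.1 p.2 :=
      (Finset.sum_inter_add_sum_sdiff _ _ _).symm
    have e2 : ∑ p ∈ T, dist2 p.1 p.2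
        = ∑ p ∈ bkmPairs J ∩ T, dist2 p.1 p.2 + ∑ p ∈ T \ bkmPairs J, dist2 p.1 p.2 := by
      rw [Finset.inter_comm]
      exact (Finset.sum_inter_add_sum_sdiff _ _ _).symm
    constructor
    · have hle := bkm_sum_le_of_pointwise_lt _ _ (fun p => dist2 p.1 p.2) hcards hlt
      rw [e1, e2]; linarith
    · intro hne
      have hA : (bkmPairs J \ T).Nonempty := by
        rw [Finset.sdiff_nonempty]
        intro hsub
        exact hne (Finset.eq_of_subset_of_card_le hsub (by rw [hPJcard, hTcard])).symm
      have hlt' := bkm_sum_lt_of_pointwise_lt _ _ (fun p => dist2 p.1 p.2) hcards hA hlt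
      rw [e1, e2]; linarith
  have h2npos : (0 : ℝ) < 1 / (2 * n) := by positivity
  -- pair-set equality implies relabeling
  have hperm : ∀ I : Fin K → Finset (Fin N), BalancedPartition n I →
      bkmPairs I = bkmPairs J → ∃ σ : Equiv.Perm (Fin K), ∀ k, I k = J (σ k) := by
    intro I hI hPeq
    have hmap : ∀ k, ∃ ℓ, I k = J ℓ := by
      intro k
      have hne : (I k).Nonempty := by
        rw [← Finset.card_pos, hI.1 k]; exact hn
      obtain ⟨i, hi⟩ := hne
      obtain ⟨ℓ, hℓ⟩ := hJ.2.2 i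
      refine ⟨ℓ, Finset.eq_of_subset_of_card_le ?_ (by rw [hJ.1 ℓ, hI.1 k])⟩
      intro j hj
      rcases eq_or_ne j i with rfl | hji
      · exact hℓ
      · have hpair : (i, j) ∈ bkmPairs I :=
          (bkm_mem_pairs I _).mpr ⟨hji.symm, k, hi, hj⟩
        rw [hPeq, bkm_mem_pairs] at hpair
        obtain ⟨-, m, him, hjm⟩ := hpair
        have : m = ℓ := by
          by_contra hml
          exact absurd hℓ (Finset.disjoint_left.mp (hJ.2.1 m ℓ hml) him)
        exact this ▸ hjm
    choose f hf using hmap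
    have hinj : Function.Injective f := by
      intro k k' hkk'
      by_contra hne
      have hIeq : I k = I k' := by rw [hf k, hf k', hkk']
      have hne' : (I k).Nonempty := by rw [← Finset.card_pos, hI.1 k]; exact hn
      obtain ⟨i, hi⟩ := hne'
      exact absurd (hIeq ▸ hi) (Finset.disjoint_left.mp (hI.2.1 k k' hne) hi)
    exact ⟨Equiv.ofBijective f (Finite.injective_iff_bijective.mp hinj), fun k => hf k⟩
  refine ⟨?_, ?_, ?_, ?_, ?_⟩
  · -- (a)
    intro I hI
    rw [hobj I hI, hobj J hJ]
    apply mul_le_mul_of_nonneg_left _ h2npos.le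
    exact (hkey (bkmPairs I) (Finset.filter_subset _ _) (bkm_pairs_card I hI)).1
  · -- (b)
    intro I hI heq
    rw [hobj I hI, hobj J hJ] at heq
    have hsum : ∑ p ∈ bkmPairs I, dist2 p.1 p.2 = ∑ p ∈ bkmPairs J, dist2 p.1 p.2 :=
      mul_left_cancel₀ (ne_of_gt h2npos) heq
    have hPeq : bkmPairs I = bkmPairs J := by
      by_contra hne
      have := (hkey (bkmPairs I) (Finset.filter_subset _ _) (bkm_pairs_card I hI)).2 hne
      linarith
    exact hperm I hI hPeq
  · -- (c)
    rw [hobj J hJ, bkm_sum_pairs J hJ dist2 hg0]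
  · -- (d) card
    exact bkm_pairs_card J hJ
  · -- (d) minimality
    intro T hTsub hTcard
    exact (hkey T hTsub hTcard).1
end

section
/- Under perfect separation (Assumption S) with balanced clusters of size n = N/K and the convention 1 ∈ J₁, any optimal solution (x¹, M¹, x, M) of the balanced LP relaxation R_LP^b with symmetry-breaking constraint x¹₁ = 1 satisfies x¹ᵢ = 1 for all i ∈ J₁ and x¹ᵢ = −1 for all i ∉ J₁; in particular the first cluster J₁ is exactly recovered by selecting the n largest entries of x¹. -/
/-- The feasible set `C_LP(n)` (i.e. `C_SDP(n)` without the semidefinite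
constraint `M ⪰ xxᵀ`). -/
def CLP (N n : ℕ) (x : Fin N → ℝ) (M : Matrix (Fin N) (Fin N) ℝ) : Prop :=
  M.IsSymm ∧
  (∑ i, x i = 2 * (n : ℝ) - N) ∧
  (M.mulVec (fun _ => 1) = (2 * (n : ℝ) - N) • x) ∧
  (∀ i, M i i = 1) ∧
  (∀ i j, 0 ≤ M i j + 1 + x i + x j) ∧
  (∀ i j, 0 ≤ M i j + 1 - x i - x j) ∧
  (∀ i j, M i j - 1 + x i - x j ≤ 0) ∧
  (∀ i j, M i j - 1 - x i + x j ≤ 0)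

/-- The objective of the balanced LP relaxation `R_LP^b`. -/
noncomputable def objRLPb {N : ℕ} (K n : ℕ) (D : Fin N → Fin N → ℝ)
    (x1 : Fin N → ℝ) (M1 : Matrix (Fin N) (Fin N) ℝ)
    (x : Fin N → ℝ) (M : Matrix (Fin N) (Fin N) ℝ) : ℝ :=
  (1 / (8 * n)) * ∑ i, ∑ j, D i j *
    ((M1 i j + 1 + x1 i + x1 j) + ((K : ℝ) - 1) * (M i j + 1 + x i + x j))

/-- Feasibility in `R_LP^b` with symmetry-breaking constraint `x¹_{i₀} = 1`. -/
def FeasRLPb {N : ℕ} (K n : ℕ) (i0 : Fin N)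
    (x1 : Fin N → ℝ) (M1 : Matrix (Fin N) (Fin N) ℝ)
    (x : Fin N → ℝ) (M : Matrix (Fin N) (Fin N) ℝ) : Prop :=
  CLP N n x1 M1 ∧ CLP N n x M ∧
    (∀ i, x1 i + ((K : ℝ) - 1) * x i = 2 - K) ∧ x1 i0 = 1

noncomputable def chi {N K : ℕ} (J : Fin K → Finset (Fin N)) (k : Fin K) (i : Fin N) : ℝ :=
  if i ∈ J k then 1 else -1

lemma chi_sq {N K : ℕ} (J : Fin K → Finset (Fin N)) (k : Fin K) (i : Fin N) :
    chi J k i * chi J k i = 1 := by unfold chi; split <;> norm_num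

lemma one_add_chi {N K : ℕ} (J : Fin K → Finset (Fin N)) (k : Fin K) (i : Fin N) :
    0 ≤ 1 + chi J k i := by unfold chi; split <;> norm_num

lemma one_sub_chi {N K : ℕ} (J : Fin K → Finset (Fin N)) (k : Fin K) (i : Fin N) :
    0 ≤ 1 - chi J k i := by unfold chi; split <;> norm_num

lemma sum_chi_col {N K n : ℕ} {J : Fin K → Finset (Fin N)} (hJ : BalancedPartition n J)
    (k : Fin K) : ∑ i, chi J k i = 2 * (n : ℝ) - N := by
  have h : ∀ i, chi J k i = 2 * (if i ∈ J k then (1:ℝ) else 0) - 1 := by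
    intro i; unfold chi; split <;> norm_num
  rw [Finset.sum_congr rfl (fun i _ => h i), Finset.sum_sub_distrib, ← Finset.mul_sum,
    Finset.sum_boole, Finset.sum_const]
  have : Finset.univ.filter (fun i => i ∈ J k) = J k := by ext i; simp
  rw [this, hJ.1 k]
  simp

lemma sum_chi_k {N K n : ℕ} {J : Fin K → Finset (Fin N)} (hJ : BalancedPartition n J)
    (i : Fin N) : ∑ k, chi J k i = 2 - (K : ℝ) := by
  have h : ∀ k, chi J k i = 2 * (if i ∈ J k then (1:ℝ) else 0) - 1 := by
    intro k; unfold chi; split <;> norm_num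
  rw [Finset.sum_congr rfl (fun k _ => h k), Finset.sum_sub_distrib, ← Finset.mul_sum,
    Finset.sum_boole, Finset.sum_const]
  obtain ⟨k0, hk0⟩ := hJ.2.2 i
  have huniq : ∀ k, i ∈ J k → k = k0 := by
    intro k hk
    by_contra hne
    exact (Finset.disjoint_left.mp (hJ.2.1 k k0 hne) hk) hk0
  have : Finset.univ.filter (fun k => i ∈ J k) = {k0} := by
    ext k; simp only [Finset.mem_filter, Finset.mem_univ, true_and, Finset.mem_singleton]
    exact ⟨huniq k, fun h => h ▸ hk0⟩
  rw [this]
  simp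
noncomputable def pM1 {N K : ℕ} (J : Fin K → Finset (Fin N)) (k0 : Fin K) :
    Matrix (Fin N) (Fin N) ℝ := Matrix.of fun i j => chi J k0 i * chi J k0 j

noncomputable def px {N : ℕ} (K : ℕ) (J : Fin K → Finset (Fin N)) (k0 : Fin K) :
    Fin N → ℝ := fun i => (∑ k ∈ Finset.univ.erase k0, chi J k i) / ((K : ℝ) - 1)

noncomputable def pM {N : ℕ} (K : ℕ) (J : Fin K → Finset (Fin N)) (k0 : Fin K) :
    Matrix (Fin N) (Fin N) ℝ :=
  Matrix.of fun i j => (∑ k ∈ Finset.univ.erase k0, chi J k i * chi J k j) / ((K : ℝ) - 1)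

lemma card_erase_k0 {K : ℕ} (hK2 : 2 ≤ K) (k0 : Fin K) :
    ((Finset.univ.erase k0).card : ℝ) = (K : ℝ) - 1 := by
  rw [Finset.card_erase_of_mem (Finset.mem_univ _)]
  simp only [Finset.card_univ, Fintype.card_fin]
  have : 1 ≤ K := by omega
  push_cast [Nat.cast_sub this]
  ring

lemma planted_feas {N K n : ℕ} (hK2 : 2 ≤ K)
    {J : Fin K → Finset (Fin N)} (hJ : BalancedPartition n J) (k0 : Fin K)
    {i0 : Fin N} (hi0 : i0 ∈ J k0) :
    FeasRLPb K n i0 (chi J k0) (pM1 J k0) (px K J k0) (pM K J k0) := by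
  have hc : ((K : ℝ) - 1) ≠ 0 := by
    have : (2:ℝ) ≤ K := by exact_mod_cast hK2
    linarith
  have hcpos : (0:ℝ) ≤ (K : ℝ) - 1 := by
    have : (2:ℝ) ≤ K := by exact_mod_cast hK2
    linarith
  have hcard := card_erase_k0 hK2 k0
  refine ⟨⟨?_, ?_, ?_, ?_, ?_, ?_, ?_, ?_⟩, ⟨?_, ?_, ?_, ?_, ?_, ?_, ?_, ?_⟩, ?_, ?_⟩
  · -- M1 symm
    ext i j; simp [pM1, Matrix.transpose_apply, mul_comm]
  · exact sum_chi_col hJ k0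
  · funext i
    simp only [Matrix.mulVec, dotProduct, pM1, Matrix.of_apply, mul_one, Pi.smul_apply,
      smul_eq_mul]
    rw [← Finset.mul_sum, sum_chi_col hJ k0, mul_comm]
  · intro i; exact chi_sq J k0 i
  · intro i j
    simp only [pM1, Matrix.of_apply]
    nlinarith [mul_nonneg (one_add_chi J k0 i) (one_add_chi J k0 j)]
  · intro i j
    simp only [pM1, Matrix.of_apply]
    nlinarith [mul_nonneg (one_sub_chi J k0 i) (one_sub_chi J k0 j)]
  · intro i j
    simp only [pM1, Matrix.of_apply]
    nlinarith [mul_nonneg (one_sub_chi J k0 i) (one_add_chi J k0 j)]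
  · intro i j
    simp only [pM1, Matrix.of_apply]
    nlinarith [mul_nonneg (one_add_chi J k0 i) (one_sub_chi J k0 j)]
  · -- pM symm
    ext i j
    simp only [pM, Matrix.transpose_apply, Matrix.of_apply]
    congr 1
    exact Finset.sum_congr rfl (fun k _ => mul_comm _ _)
  · -- sum px
    simp only [px]
    rw [← Finset.sum_div, Finset.sum_comm]
    rw [Finset.sum_congr rfl (fun k _ => sum_chi_col hJ k), Finset.sum_const,
      nsmul_eq_mul, hcard]
    field_simp
  · -- mulVec pM
    funext i
    simp only [Matrix.mulVec, dotProduct, pM, Matrix.of_apply, mul_one, Pi.smul_apply,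
      smul_eq_mul, px]
    rw [← Finset.sum_div, Finset.sum_comm]
    have : ∀ k ∈ Finset.univ.erase k0, ∑ j, chi J k i * chi J k j
        = (2 * (n:ℝ) - N) * chi J k i := by
      intro k _
      rw [← Finset.mul_sum, sum_chi_col hJ k, mul_comm]
    rw [Finset.sum_congr rfl this, ← Finset.mul_sum]
    field_simp
  · -- pM diag
    intro i
    simp only [pM, Matrix.of_apply]
    rw [Finset.sum_congr rfl (fun k _ => chi_sq J k i), Finset.sum_const, nsmul_eq_mul,
      mul_one, hcard, div_self hc]
  · -- sign a
    intro i j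
    have key : (0:ℝ) ≤ ∑ k ∈ Finset.univ.erase k0, (1 + chi J k i) * (1 + chi J k j) :=
      Finset.sum_nonneg fun k _ => mul_nonneg (one_add_chi J k i) (one_add_chi J k j)
    have expand : ∑ k ∈ Finset.univ.erase k0, (1 + chi J k i) * (1 + chi J k j)
        = (∑ k ∈ Finset.univ.erase k0, chi J k i * chi J k j) + ((K:ℝ) - 1)
          + (∑ k ∈ Finset.univ.erase k0, chi J k i) + (∑ k ∈ Finset.univ.erase k0, chi J k j) := by
      rw [Finset.sum_congr rfl (fun k _ => by ring :
        ∀ k ∈ Finset.univ.erase k0, (1 + chi J k i) * (1 + chi J k j)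
          = chi J k i * chi J k j + 1 + chi J k i + chi J k j)]
      simp only [Finset.sum_add_distrib, Finset.sum_const, nsmul_eq_mul, mul_one, hcard]
    have : pM K J k0 i j + 1 + px K J k0 i + px K J k0 j
        = (∑ k ∈ Finset.univ.erase k0, (1 + chi J k i) * (1 + chi J k j)) / ((K:ℝ) - 1) := by
      simp only [pM, px, Matrix.of_apply, expand]
      field_simp
      try ring
    rw [this]
    exact div_nonneg key hcpos
  · intro i j
    have key : (0:ℝ) ≤ ∑ k ∈ Finset.univ.erase k0, (1 - chi J k i) * (1 - chi J k j) :=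
      Finset.sum_nonneg fun k _ => mul_nonneg (one_sub_chi J k i) (one_sub_chi J k j)
    have : pM K J k0 i j + 1 - px K J k0 i - px K J k0 j
        = (∑ k ∈ Finset.univ.erase k0, (1 - chi J k i) * (1 - chi J k j)) / ((K:ℝ) - 1) := by
      simp only [pM, px, Matrix.of_apply]
      rw [Finset.sum_congr rfl (fun k _ => by ring :
        ∀ k ∈ Finset.univ.erase k0, (1 - chi J k i) * (1 - chi J k j)
          = chi J k i * chi J k j + 1 - chi J k i - chi J k j)]
      simp only [Finset.sum_add_distrib, Finset.sum_sub_distrib, Finset.sum_const,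
        nsmul_eq_mul, mul_one, hcard]
      field_simp
      try ring
    rw [this]
    exact div_nonneg key hcpos
  · intro i j
    have key : (0:ℝ) ≤ ∑ k ∈ Finset.univ.erase k0, (1 - chi J k i) * (1 + chi J k j) :=
      Finset.sum_nonneg fun k _ => mul_nonneg (one_sub_chi J k i) (one_add_chi J k j)
    have : pM K J k0 i j - 1 + px K J k0 i - px K J k0 j
        = -((∑ k ∈ Finset.univ.erase k0, (1 - chi J k i) * (1 + chi J k j)) / ((K:ℝ) - 1)) := by
      simp only [pM, px, Matrix.of_apply]
      rw [Finset.sum_congr rfl (fun k _ => by ring :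
        ∀ k ∈ Finset.univ.erase k0, (1 - chi J k i) * (1 + chi J k j)
          = 1 - chi J k i * chi J k j - chi J k i + chi J k j)]
      simp only [Finset.sum_add_distrib, Finset.sum_sub_distrib, Finset.sum_const,
        nsmul_eq_mul, mul_one, hcard]
      field_simp
      try ring
    rw [this]
    have := div_nonneg key hcpos
    linarith
  · intro i j
    have key : (0:ℝ) ≤ ∑ k ∈ Finset.univ.erase k0, (1 + chi J k i) * (1 - chi J k j) :=
      Finset.sum_nonneg fun k _ => mul_nonneg (one_add_chi J k i) (one_sub_chi J k j)
    have : pM K J k0 i j - 1 - px K J k0 i + px K J k0 j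
        = -((∑ k ∈ Finset.univ.erase k0, (1 + chi J k i) * (1 - chi J k j)) / ((K:ℝ) - 1)) := by
      simp only [pM, px, Matrix.of_apply]
      rw [Finset.sum_congr rfl (fun k _ => by ring :
        ∀ k ∈ Finset.univ.erase k0, (1 + chi J k i) * (1 - chi J k j)
          = 1 - chi J k i * chi J k j + chi J k i - chi J k j)]
      simp only [Finset.sum_add_distrib, Finset.sum_sub_distrib, Finset.sum_const,
        nsmul_eq_mul, mul_one, hcard]
      field_simp
      try ring
    rw [this]
    have := div_nonneg key hcpos
    linarith
  · -- link
    intro i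
    have : ((K:ℝ) - 1) * px K J k0 i = ∑ k ∈ Finset.univ.erase k0, chi J k i := by
      simp only [px]; field_simp
    rw [this, Finset.add_sum_erase Finset.univ (fun k => chi J k i) (Finset.mem_univ k0), sum_chi_k hJ i]
  · -- x1 i0 = 1
    simp [chi, hi0]
/-- Combined nonnegative matrix `S = H + (K-1)W`. -/
def Scomb {N : ℕ} (K : ℕ) (x1 x : Fin N → ℝ) (M1 M : Matrix (Fin N) (Fin N) ℝ) :
    Fin N → Fin N → ℝ := fun i j =>
  (M1 i j + 1 + x1 i + x1 j) + ((K : ℝ) - 1) * (M i j + 1 + x i + x j)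

/-- Idealized combined matrix of the planted solution. -/
def Tst {N K : ℕ} (κ : Fin N → Fin K) : Fin N → Fin N → ℝ := fun i j =>
  if κ j = κ i then 4 else 0

lemma obj_eq {N : ℕ} (K n : ℕ) (D : Fin N → Fin N → ℝ) (x1 x : Fin N → ℝ)
    (M1 M : Matrix (Fin N) (Fin N) ℝ) :
    objRLPb K n D x1 M1 x M = (1 / (8 * (n:ℝ))) * ∑ i, ∑ j, D i j * Scomb K x1 x M1 M i j :=
  rfl

lemma planted_S {N K : ℕ} (hK2 : 2 ≤ K) (J : Fin K → Finset (Fin N)) (k0 : Fin K)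
    (i j : Fin N) :
    Scomb K (chi J k0) (px K J k0) (pM1 J k0) (pM K J k0) i j
      = ∑ k, (1 + chi J k i) * (1 + chi J k j) := by
  have hc : ((K : ℝ) - 1) ≠ 0 := by
    have : (2:ℝ) ≤ K := by exact_mod_cast hK2
    linarith
  have hcard := card_erase_k0 hK2 k0
  simp only [Scomb, pM1, pM, px, Matrix.of_apply]
  rw [← Finset.add_sum_erase Finset.univ (fun k => (1 + chi J k i) * (1 + chi J k j))
    (Finset.mem_univ k0)]
  have h2 : ∑ k ∈ Finset.univ.erase k0, (1 + chi J k i) * (1 + chi J k j)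
      = (∑ k ∈ Finset.univ.erase k0, chi J k i * chi J k j) + ((K:ℝ) - 1)
        + (∑ k ∈ Finset.univ.erase k0, chi J k i) + (∑ k ∈ Finset.univ.erase k0, chi J k j) := by
    rw [Finset.sum_congr rfl (fun k _ => by ring :
      ∀ k ∈ Finset.univ.erase k0, (1 + chi J k i) * (1 + chi J k j)
        = chi J k i * chi J k j + 1 + chi J k i + chi J k j)]
    simp only [Finset.sum_add_distrib, Finset.sum_const, nsmul_eq_mul, mul_one, hcard]
  rw [h2]
  field_simp
  ring
theorem lp_relaxation_recovers_first_cluster (N d K n : ℕ)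
    (hK : 0 < K) (hn : 0 < n) (hN : N = K * n)
    (ξ : Fin N → EuclideanSpace ℝ (Fin d))
    (D : Fin N → Fin N → ℝ) (hD : ∀ i j, D i j = ‖ξ i - ξ j‖ ^ 2)
    (J : Fin K → Finset (Fin N)) (hJ : BalancedPartition n J)
    (hsep : ∀ k : Fin K, ∀ i ∈ J k, ∀ j ∈ J k,
      ∀ k₁ k₂ : Fin K, k₁ ≠ k₂ → ∀ i' ∈ J k₁, ∀ j' ∈ J k₂,
        D i j < D i' j')
    (i0 : Fin N) (hi0 : i0 ∈ J ⟨0, hK⟩)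
    (x1 x : Fin N → ℝ) (M1 M : Matrix (Fin N) (Fin N) ℝ)
    (hfeas : FeasRLPb K n i0 x1 M1 x M)
    (hopt : ∀ (x1' x' : Fin N → ℝ) (M1' M' : Matrix (Fin N) (Fin N) ℝ),
      FeasRLPb K n i0 x1' M1' x' M' →
      objRLPb K n D x1 M1 x M ≤ objRLPb K n D x1' M1' x' M') :
    (∀ i ∈ J ⟨0, hK⟩, x1 i = 1) ∧ (∀ i ∉ J ⟨0, hK⟩, x1 i = -1) := by
  classical
  obtain ⟨hf1, hf2, hlink, hx1i0⟩ := hfeas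
  obtain ⟨h1s, h1sum, h1mv, h1diag, h1a, h1b, h1c, h1e⟩ := hf1
  obtain ⟨h2s, h2sum, h2mv, h2diag, h2a, h2b, h2c, h2e⟩ := hf2
  by_cases hK1 : K = 1
  · subst hK1
    constructor
    · intro i _
      have h := hlink i
      norm_num at h
      linarith
    · intro i hi
      obtain ⟨k, hk⟩ := hJ.2.2 i
      have : k = ⟨0, hK⟩ := Subsingleton.elim _ _
      exact absurd (this ▸ hk) hi
  have hK2 : 2 ≤ K := by omega
  have hKr : (2:ℝ) ≤ (K:ℝ) := by exact_mod_cast hK2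
  have hcpos : (0:ℝ) < (K:ℝ) - 1 := by linarith
  set k0 : Fin K := ⟨0, hK⟩ with hk0def
  -- cluster assignment map
  have hex := hJ.2.2
  set κ : Fin N → Fin K := fun i => (hex i).choose with hκdef
  have hκ : ∀ i, i ∈ J (κ i) := fun i => (hex i).choose_spec
  have huniq : ∀ (i : Fin N) (k : Fin K), i ∈ J k → k = κ i := by
    intro i k hik
    by_contra hne
    exact (Finset.disjoint_left.mp (hJ.2.1 k (κ i) hne) hik) (hκ i)
  -- row sums of M1, M
  have h1row : ∀ i, ∑ j, M1 i j = (2 * (n:ℝ) - N) * x1 i := by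
    intro i
    have h := congrFun h1mv i
    simpa [Matrix.mulVec, dotProduct] using h
  have h2row : ∀ i, ∑ j, M i j = (2 * (n:ℝ) - N) * x i := by
    intro i
    have h := congrFun h2mv i
    simpa [Matrix.mulVec, dotProduct] using h
  -- basic facts about S
  have hS0 : ∀ i j, 0 ≤ Scomb K x1 x M1 M i j := fun i j =>
    add_nonneg (h1a i j) (mul_nonneg hcpos.le (h2a i j))
  have hS4 : ∀ i j, Scomb K x1 x M1 M i j ≤ 4 := by
    intro i j
    have e2 : ((K:ℝ) - 1) * (M i j + 1 + x i + x j) ≤ ((K:ℝ) - 1) * (2 + 2 * x j) :=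
      mul_le_mul_of_nonneg_left (by linarith [h2c i j]) hcpos.le
    have hl := hlink j
    simp only [Scomb]
    nlinarith [h1c i j]
  have hSrow : ∀ i, ∑ j, Scomb K x1 x M1 M i j = 4 * n := by
    intro i
    simp only [Scomb]
    have eA : ∑ j, (M1 i j + 1 + x1 i + x1 j)
        = (2 * (n:ℝ) - N) * x1 i + N + N * x1 i + (2 * n - N) := by
      simp only [Finset.sum_add_distrib, Finset.sum_const, Finset.card_univ,
        Fintype.card_fin, nsmul_eq_mul, h1row i, h1sum]
      ring
    have eB : ∑ j, (M i j + 1 + x i + x j)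
        = (2 * (n:ℝ) - N) * x i + N + N * x i + (2 * n - N) := by
      simp only [Finset.sum_add_distrib, Finset.sum_const, Finset.card_univ,
        Fintype.card_fin, nsmul_eq_mul, h2row i, h2sum]
      ring
    rw [Finset.sum_add_distrib, ← Finset.mul_sum, eA, eB]
    linear_combination (2 * (n:ℝ)) * hlink i
  -- facts about Tst
  have hfilter : ∀ i, Finset.univ.filter (fun j => κ j = κ i) = J (κ i) := by
    intro i
    ext j
    simp only [Finset.mem_filter, Finset.mem_univ, true_and]
    exact ⟨fun h => by rw [← h]; exact hκ j, fun h => (huniq j (κ i) h).symm⟩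
  have hTrow : ∀ i, ∑ j, Tst κ i j = 4 * n := by
    intro i
    simp only [Tst]
    rw [← Finset.sum_filter, hfilter i, Finset.sum_const, hJ.1, nsmul_eq_mul]
    ring
  have hT4 : ∀ i j, j ∈ J (κ i) → Tst κ i j = 4 := by
    intro i j hj
    simp only [Tst]
    exact if_pos (huniq j (κ i) hj).symm
  have hT0 : ∀ i j, j ∉ J (κ i) → Tst κ i j = 0 := by
    intro i j hj
    simp only [Tst]
    exact if_neg (fun (h : κ j = κ i) => hj (h ▸ hκ j))
  -- the per-row comparison constant
  have hciX : ∀ i : Fin N, ∃ c : ℝ,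
      (∀ j ∈ J (κ i), D i j ≤ c) ∧ (∀ j, j ∉ J (κ i) → c < D i j) := by
    intro i
    refine ⟨(J (κ i)).sup' ⟨i, hκ i⟩ (D i), fun j hj => Finset.le_sup' (D i) hj, ?_⟩
    intro j hj
    obtain ⟨j', hj', hEq⟩ := Finset.exists_mem_eq_sup' (⟨i, hκ i⟩ : (J (κ i)).Nonempty) (D i)
    rw [hEq]
    exact hsep (κ i) i (hκ i) j' hj' (κ i) (κ j) (fun h => hj (by rw [h]; exact hκ j))
      i (hκ i) j (hκ j)
  choose ci hub hlt using hciX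
  have htermle : ∀ i j, ci i * (Scomb K x1 x M1 M i j - Tst κ i j)
      ≤ D i j * (Scomb K x1 x M1 M i j - Tst κ i j) := by
    intro i j
    by_cases hj : j ∈ J (κ i)
    · rw [hT4 i j hj]
      exact mul_le_mul_of_nonpos_right (hub i j hj) (by linarith [hS4 i j])
    · rw [hT0 i j hj]
      simpa using mul_le_mul_of_nonneg_right (hlt i j hj).le (hS0 i j)
  have hrowle : ∀ i, ∑ j, D i j * Tst κ i j ≤ ∑ j, D i j * Scomb K x1 x M1 M i j := by
    intro i
    have h := Finset.sum_le_sum (fun j (_ : j ∈ Finset.univ) => htermle i j)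
    have e1 : ∑ j, ci i * (Scomb K x1 x M1 M i j - Tst κ i j) = 0 := by
      rw [← Finset.mul_sum, Finset.sum_sub_distrib, hSrow i, hTrow i]
      ring
    have e2 : ∑ j, D i j * (Scomb K x1 x M1 M i j - Tst κ i j)
        = ∑ j, D i j * Scomb K x1 x M1 M i j - ∑ j, D i j * Tst κ i j := by
      simp [mul_sub, Finset.sum_sub_distrib]
    rw [e1, e2] at h
    linarith
  -- the planted solution and optimality
  have hplant := planted_feas hK2 hJ k0 hi0
  have hobj := hopt (chi J k0) (px K J k0) (pM1 J k0) (pM K J k0) hplant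
  have hSp : ∀ i j, Scomb K (chi J k0) (px K J k0) (pM1 J k0) (pM K J k0) i j = Tst κ i j := by
    intro i j
    rw [planted_S hK2 J k0 i j]
    have hterm : ∀ k, (1 + chi J k i) * (1 + chi J k j)
        = if (i ∈ J k ∧ j ∈ J k) then (4:ℝ) else 0 := by
      intro k
      unfold chi
      by_cases hi' : i ∈ J k <;> by_cases hj' : j ∈ J k <;> simp [hi', hj'] <;> norm_num
    rw [Finset.sum_congr rfl (fun k _ => hterm k), ← Finset.sum_filter]
    by_cases hc' : κ j = κ i
    · have hfe : Finset.univ.filter (fun k => i ∈ J k ∧ j ∈ J k) = {κ i} := by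
        ext k
        simp only [Finset.mem_filter, Finset.mem_univ, true_and, Finset.mem_singleton]
        constructor
        · rintro ⟨ha, _⟩; exact huniq i k ha
        · rintro rfl; exact ⟨hκ i, by rw [← hc']; exact hκ j⟩
      rw [hfe, Finset.sum_singleton]
      simp [Tst, hc']
    · have hfe : Finset.univ.filter (fun k => i ∈ J k ∧ j ∈ J k) = ∅ := by
        ext k
        simp only [Finset.mem_filter, Finset.mem_univ, true_and, Finset.notMem_empty,
          iff_false]
        rintro ⟨ha, hb⟩
        exact hc' ((huniq j k hb).symm.trans (huniq i k ha))
      rw [hfe, Finset.sum_empty]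
      simp [Tst, hc']
  rw [obj_eq, obj_eq] at hobj
  have hre : ∑ i, ∑ j, D i j * Scomb K (chi J k0) (px K J k0) (pM1 J k0) (pM K J k0) i j
      = ∑ i, ∑ j, D i j * Tst κ i j :=
    Finset.sum_congr rfl fun i _ => Finset.sum_congr rfl fun j _ => by rw [hSp i j]
  rw [hre] at hobj
  have h8 : (0:ℝ) < 1 / (8 * (n:ℝ)) := by positivity
  have hobj' : ∑ i, ∑ j, D i j * Scomb K x1 x M1 M i j ≤ ∑ i, ∑ j, D i j * Tst κ i j :=
    le_of_mul_le_mul_left hobj h8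
  -- row-wise equality
  have hroweq : ∀ i : Fin N, ∑ j, D i j * Tst κ i j = ∑ j, D i j * Scomb K x1 x M1 M i j := by
    have hge := Finset.sum_le_sum (fun i (_ : i ∈ Finset.univ) => hrowle i)
    have heq : (∑ i, ∑ j, D i j * Tst κ i j) = ∑ i, ∑ j, D i j * Scomb K x1 x M1 M i j :=
      le_antisymm hge hobj'
    intro i
    exact (Finset.sum_eq_sum_iff_of_le (fun i _ => hrowle i)).mp heq i (Finset.mem_univ i)
  -- termwise equality in row i0
  have htermeq : ∀ j : Fin N, ci i0 * (Scomb K x1 x M1 M i0 j - Tst κ i0 j)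
      = D i0 j * (Scomb K x1 x M1 M i0 j - Tst κ i0 j) := by
    have e1 : ∑ j, ci i0 * (Scomb K x1 x M1 M i0 j - Tst κ i0 j) = 0 := by
      rw [← Finset.mul_sum, Finset.sum_sub_distrib, hSrow i0, hTrow i0]
      ring
    have e2 : ∑ j, D i0 j * (Scomb K x1 x M1 M i0 j - Tst κ i0 j) = 0 := by
      simp only [mul_sub, Finset.sum_sub_distrib]
      rw [hroweq i0]
      ring
    have heq : ∑ j, ci i0 * (Scomb K x1 x M1 M i0 j - Tst κ i0 j)
        = ∑ j, D i0 j * (Scomb K x1 x M1 M i0 j - Tst κ i0 j) := by rw [e1, e2]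
    intro j
    exact (Finset.sum_eq_sum_iff_of_le (fun j _ => htermle i0 j)).mp heq j (Finset.mem_univ j)
  have houtzero : ∀ j, j ∉ J (κ i0) → Scomb K x1 x M1 M i0 j = 0 := by
    intro j hj
    have h := htermeq j
    rw [hT0 i0 j hj, sub_zero] at h
    by_contra hne
    have hpos : 0 < Scomb K x1 x M1 M i0 j := lt_of_le_of_ne (hS0 i0 j) (Ne.symm hne)
    have := mul_lt_mul_of_pos_right (hlt i0 j hj) hpos
    linarith
  have hsum_in : ∑ j ∈ J (κ i0), Scomb K x1 x M1 M i0 j = 4 * n := by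
    have h := Finset.sum_subset (Finset.subset_univ (J (κ i0)))
      (fun j _ hj => houtzero j hj)
    rw [h, hSrow i0]
  have hin4 : ∀ j ∈ J (κ i0), Scomb K x1 x M1 M i0 j = 4 := by
    have h0 : ∑ j ∈ J (κ i0), ((4:ℝ) - Scomb K x1 x M1 M i0 j) = 0 := by
      rw [Finset.sum_sub_distrib, Finset.sum_const, hJ.1, hsum_in, nsmul_eq_mul]
      ring
    have h1 := (Finset.sum_eq_zero_iff_of_nonneg
      (fun j (_ : j ∈ J (κ i0)) => by linarith [hS4 i0 j])).mp h0
    intro j hj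
    have := h1 j hj
    linarith
  have hk0κ : κ i0 = k0 := (huniq i0 k0 hi0).symm
  have hxi0 : x i0 = -1 := by
    have h := hlink i0
    have h2 : ((K:ℝ) - 1) * (x i0 + 1) = 0 := by linear_combination h - hx1i0
    rcases mul_eq_zero.mp h2 with h' | h'
    · exact absurd h' (ne_of_gt hcpos)
    · linarith
  constructor
  · intro i hi
    have hi' : i ∈ J (κ i0) := by rw [hk0κ]; exact hi
    have hS4i := hin4 i hi'
    simp only [Scomb] at hS4i
    have hBle : M i0 i + 1 + x i0 + x i ≤ 0 := by linarith [h2e i0 i, hxi0]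
    have hB : M i0 i + 1 + x i0 + x i = 0 := le_antisymm hBle (h2a i0 i)
    have hz : ((K:ℝ) - 1) * (M i0 i + 1 + x i0 + x i) = 0 := by rw [hB]; ring
    have hA : M1 i0 i + 1 + x1 i0 + x1 i = 4 := by linarith
    have hx1ub : x1 i ≤ 1 := by
      have h1 := h1b i i
      have h2 := h1diag i
      linarith
    have hc1 := h1c i0 i
    exact le_antisymm hx1ub (by linarith [hx1i0])
  · intro i hi
    have hi' : i ∉ J (κ i0) := by rw [hk0κ]; exact hi
    have hS0i := houtzero i hi'
    simp only [Scomb] at hS0i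
    have hBn : 0 ≤ ((K:ℝ) - 1) * (M i0 i + 1 + x i0 + x i) :=
      mul_nonneg hcpos.le (h2a i0 i)
    have hA0 : M1 i0 i + 1 + x1 i0 + x1 i = 0 := by linarith [h1a i0 i]
    have hx1lb : -1 ≤ x1 i := by
      have h1 := h1a i i
      have h2 := h1diag i
      linarith
    have hb := h1b i0 i
    exact le_antisymm (by linarith [hx1i0]) hx1lb
end
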